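/- Let S = ℕ equipped with the restriction of the Euclidean metric of ℝ, and let M = {μ ∈ M(ℕ) : ‖μ‖_TV ≤ 1} be the closed total variation unit ball. Then the restriction to M of the σ(M(ℕ), BL(ℕ))-weak topology does not coincide with the restriction to M of the topology induced by the norm ‖·‖*_BL; in particular, the total variation unit sphere {μ ∈ M(ℕ) : ‖μ‖_TV = 1} is ‖·‖*_BL-closed in M but is not closed in the relative σ(M(ℕ), BL(ℕ))-weak topology on M. -/

import Mathlib

open MeasureTheory Filter Topology

/-- A function is bounded Lipschitz. -/
def IsBL {S : Type*} [PseudoMetricSpace S] (f : S → ℝ) : Prop :=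
  (∃ C : ℝ, ∀ x, |f x| ≤ C) ∧ ∃ K : NNReal, LipschitzWith K f

/-- Pairing of a finite signed Borel measure with a function, via the Jordan decomposition. -/
noncomputable def pairing {S : Type*} [MeasurableSpace S] (μ : SignedMeasure S) (f : S → ℝ) : ℝ :=
  (∫ x, f x ∂μ.toJordanDecomposition.posPart) - ∫ x, f x ∂μ.toJordanDecomposition.negPart

/-- Total variation norm of a finite signed measure. -/
noncomputable def tvNorm {S : Type*} [MeasurableSpace S] (μ : SignedMeasure S) : ℝ :=
  (μ.totalVariation Set.univ).toReal

/-- Dual bounded Lipschitz norm on signed measures. -/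
noncomputable def blDualNorm {S : Type*} [PseudoMetricSpace S] [MeasurableSpace S]
    (μ : SignedMeasure S) : ℝ :=
  sSup {r : ℝ | ∃ (f : S → ℝ) (C : ℝ) (K : NNReal), (∀ x, |f x| ≤ C) ∧
    LipschitzWith K f ∧ C + (K : ℝ) ≤ 1 ∧ r = |pairing μ f|}

-- ==== auxiliary lemmas ====

lemma nat_one_le_dist {a b : ℕ} (h : a ≠ b) : (1:ℝ) ≤ dist a b := by
  rw [Nat.dist_eq]
  rcases h.lt_or_gt with hl | hl
  · rw [abs_sub_comm, le_abs]
    left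
    have : (a:ℝ) + 1 ≤ b := by exact_mod_cast hl
    linarith
  · rw [le_abs]
    left
    have : (b:ℝ) + 1 ≤ a := by exact_mod_cast hl
    linarith

lemma pairing_zero {S : Type*} [MeasurableSpace S] (f : S → ℝ) :
    pairing (0 : SignedMeasure S) f = 0 := by
  simp [pairing, SignedMeasure.toJordanDecomposition_zero]

lemma tvNorm_eq {S : Type*} [MeasurableSpace S] (μ : SignedMeasure S) :
    tvNorm μ = (μ.toJordanDecomposition.posPart Set.univ).toReal
      + (μ.toJordanDecomposition.negPart Set.univ).toReal := by
  rw [tvNorm, SignedMeasure.totalVariation, Measure.add_apply,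
    ENNReal.toReal_add (measure_ne_top _ _) (measure_ne_top _ _)]

lemma tvNorm_nonneg {S : Type*} [MeasurableSpace S] (μ : SignedMeasure S) :
    0 ≤ tvNorm μ := ENNReal.toReal_nonneg

lemma tvNorm_zero {S : Type*} [MeasurableSpace S] :
    tvNorm (0 : SignedMeasure S) = 0 := by
  simp [tvNorm, SignedMeasure.totalVariation_zero]

lemma abs_pairing_le {S : Type*} [MeasurableSpace S] (μ : SignedMeasure S) {f : S → ℝ}
    {C : ℝ} (hf : ∀ x, |f x| ≤ C) (hC : 0 ≤ C) : |pairing μ f| ≤ C * tvNorm μ := by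
  have h1 : ‖∫ x, f x ∂μ.toJordanDecomposition.posPart‖
      ≤ C * (μ.toJordanDecomposition.posPart Set.univ).toReal :=
    norm_integral_le_of_norm_le_const (Eventually.of_forall fun x => by
      simpa using hf x)
  have h2 : ‖∫ x, f x ∂μ.toJordanDecomposition.negPart‖
      ≤ C * (μ.toJordanDecomposition.negPart Set.univ).toReal :=
    norm_integral_le_of_norm_le_const (Eventually.of_forall fun x => by
      simpa using hf x)
  rw [Real.norm_eq_abs] at h1 h2
  rw [tvNorm_eq, pairing]
  calc |(∫ x, f x ∂μ.toJordanDecomposition.posPart) - ∫ x, f x ∂μ.toJordanDecomposition.negPart|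
      ≤ |∫ x, f x ∂μ.toJordanDecomposition.posPart|
        + |∫ x, f x ∂μ.toJordanDecomposition.negPart| := abs_sub _ _
    _ ≤ _ := by rw [mul_add]; exact add_le_add h1 h2

lemma blDual_set_mem_le {S : Type*} [PseudoMetricSpace S] [MeasurableSpace S]
    (μ : SignedMeasure S) {r : ℝ}
    (hr : r ∈ {r : ℝ | ∃ (f : S → ℝ) (C : ℝ) (K : NNReal), (∀ x, |f x| ≤ C) ∧
      LipschitzWith K f ∧ C + (K : ℝ) ≤ 1 ∧ r = |pairing μ f|}) [Nonempty S] :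
    r ≤ tvNorm μ := by
  obtain ⟨f, C, K, hf, _, hCK, rfl⟩ := hr
  have hC0 : 0 ≤ C := le_trans (abs_nonneg _) (hf (Classical.arbitrary S))
  have hC1 : C ≤ 1 := by have := K.coe_nonneg; linarith
  calc |pairing μ f| ≤ C * tvNorm μ := abs_pairing_le μ hf hC0
    _ ≤ 1 * tvNorm μ := mul_le_mul_of_nonneg_right hC1 (tvNorm_nonneg μ)
    _ = tvNorm μ := one_mul _

lemma blDual_set_nonempty {S : Type*} [PseudoMetricSpace S] [MeasurableSpace S]
    (μ : SignedMeasure S) :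
    (0:ℝ) ∈ {r : ℝ | ∃ (f : S → ℝ) (C : ℝ) (K : NNReal), (∀ x, |f x| ≤ C) ∧
      LipschitzWith K f ∧ C + (K : ℝ) ≤ 1 ∧ r = |pairing μ f|} := by
  refine ⟨0, 0, 0, fun x => by simp, LipschitzWith.const' 0, by norm_num, ?_⟩
  simp [pairing]

lemma blDual_bddAbove {S : Type*} [PseudoMetricSpace S] [MeasurableSpace S] [Nonempty S]
    (μ : SignedMeasure S) :
    BddAbove {r : ℝ | ∃ (f : S → ℝ) (C : ℝ) (K : NNReal), (∀ x, |f x| ≤ C) ∧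
      LipschitzWith K f ∧ C + (K : ℝ) ≤ 1 ∧ r = |pairing μ f|} :=
  ⟨tvNorm μ, fun _ hr => blDual_set_mem_le μ hr⟩

lemma blDualNorm_le_tvNorm {S : Type*} [PseudoMetricSpace S] [MeasurableSpace S] [Nonempty S]
    (μ : SignedMeasure S) : blDualNorm μ ≤ tvNorm μ :=
  Real.sSup_le (fun _ hr => blDual_set_mem_le μ hr) (tvNorm_nonneg μ)

lemma abs_pairing_le_blDualNorm {S : Type*} [PseudoMetricSpace S] [MeasurableSpace S] [Nonempty S]
    (μ : SignedMeasure S) {f : S → ℝ} {C : ℝ} {K : NNReal} (hf : ∀ x, |f x| ≤ C)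
    (hK : LipschitzWith K f) (hCK : C + (K : ℝ) ≤ 1) :
    |pairing μ f| ≤ blDualNorm μ :=
  le_csSup (blDual_bddAbove μ) ⟨f, C, K, hf, hK, hCK, rfl⟩


lemma integrable_of_bdd {μ : Measure ℕ} [IsFiniteMeasure μ] {f : ℕ → ℝ} {C : ℝ}
    (hf : ∀ x, |f x| ≤ C) : Integrable f μ :=
  (integrable_const C).mono' (measurable_of_countable f).aestronglyMeasurable
    (Eventually.of_forall fun x => by simpa using hf x)

lemma jd_apply {α : Type*} [MeasurableSpace α] (m : SignedMeasure α) {s : Set α}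
    (hs : MeasurableSet s) :
    (m.toJordanDecomposition.posPart s).toReal - (m.toJordanDecomposition.negPart s).toReal
      = m s := by
  conv_rhs => rw [← m.toSignedMeasure_toJordanDecomposition]
  rw [JordanDecomposition.toSignedMeasure, Measure.toSignedMeasure_sub_apply hs]
  rfl

lemma pairing_add {f : ℕ → ℝ} {C : ℝ} (hf : ∀ x, |f x| ≤ C) (a b : SignedMeasure ℕ) :
    pairing (a + b) f = pairing a f + pairing b f := by
  set P := (a + b).toJordanDecomposition.posPart
  set N := (a + b).toJordanDecomposition.negPart
  set Pa := a.toJordanDecomposition.posPart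
  set Na := a.toJordanDecomposition.negPart
  set Pb := b.toJordanDecomposition.posPart
  set Nb := b.toJordanDecomposition.negPart
  have hmeas : P + Na + Nb = N + Pa + Pb := by
    ext s hs
    have h1 := jd_apply (a + b) hs
    have h2 := jd_apply a hs
    have h3 := jd_apply b hs
    have hab : (a + b) s = a s + b s := by
      rw [MeasureTheory.VectorMeasure.add_apply]
    have key : ((P s) + (Na s) + (Nb s)).toReal = ((N s) + (Pa s) + (Pb s)).toReal := by
      rw [ENNReal.toReal_add (by finiteness) (by finiteness),
        ENNReal.toReal_add (by finiteness) (by finiteness),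
        ENNReal.toReal_add (by finiteness) (by finiteness),
        ENNReal.toReal_add (by finiteness) (by finiteness)]
      linarith
    have := (ENNReal.toReal_eq_toReal_iff' (by finiteness) (by finiteness)).1 key
    simpa [Measure.add_apply] using this
  have hint : ∀ (μ : Measure ℕ), IsFiniteMeasure μ → Integrable f μ := fun μ h => by
    haveI := h; exact integrable_of_bdd hf
  have hI : ∫ x, f x ∂(P + Na + Nb) = ∫ x, f x ∂(N + Pa + Pb) := by rw [hmeas]
  rw [integral_add_measure ((hint P inferInstance).add_measure (hint Na inferInstance))
      (hint Nb inferInstance),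
    integral_add_measure (hint P inferInstance) (hint Na inferInstance),
    integral_add_measure ((hint N inferInstance).add_measure (hint Pa inferInstance))
      (hint Pb inferInstance),
    integral_add_measure (hint N inferInstance) (hint Pa inferInstance)] at hI
  simp only [pairing]
  linarith

lemma exists_norming (μ : SignedMeasure ℕ) :
    ∃ f : ℕ → ℝ, (∀ x, |f x| ≤ 1/3) ∧ LipschitzWith (2/3 : NNReal) f ∧
      pairing μ f = tvNorm μ / 3 := by
  obtain ⟨s, hs, hP, hN⟩ := μ.toJordanDecomposition.mutuallySingular
  classical
  refine ⟨fun x => if x ∈ s then -(1/3) else 1/3, fun x => by dsimp only; split <;> norm_num [abs_le], ?_, ?_⟩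
  · apply LipschitzWith.of_dist_le_mul
    intro x y
    rcases eq_or_ne x y with rfl | hxy
    · simp
    · have h1 : (1:ℝ) ≤ dist x y := nat_one_le_dist hxy
      have h2 : dist (if x ∈ s then -(1/3 : ℝ) else 1/3) (if y ∈ s then -(1/3 : ℝ) else 1/3)
          ≤ 2/3 := by
        rw [Real.dist_eq]
        split <;> split <;> norm_num [abs_le]
      calc dist (if x ∈ s then -(1/3 : ℝ) else 1/3) (if y ∈ s then -(1/3 : ℝ) else 1/3)
          ≤ 2/3 := h2
        _ = (2/3 : NNReal) * 1 := by norm_num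
        _ ≤ (2/3 : NNReal) * dist x y := by
            apply mul_le_mul_of_nonneg_left h1 (by positivity)
  · have hPint : ∫ x, (if x ∈ s then -(1/3 : ℝ) else 1/3) ∂μ.toJordanDecomposition.posPart
        = (1/3) * (μ.toJordanDecomposition.posPart Set.univ).toReal := by
      have hae : (fun x => if x ∈ s then -(1/3 : ℝ) else 1/3)
          =ᵐ[μ.toJordanDecomposition.posPart] (fun _ => (1/3 : ℝ)) := by
        refine Filter.eventuallyEq_of_mem (?_ : sᶜ ∈ _) (fun x hx => by
          have : x ∉ s := hx
          simp [this])
        rw [mem_ae_iff, compl_compl]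
        exact hP
      rw [integral_congr_ae hae, integral_const, smul_eq_mul, mul_comm]
      rfl
    have hNint : ∫ x, (if x ∈ s then -(1/3 : ℝ) else 1/3) ∂μ.toJordanDecomposition.negPart
        = -(1/3) * (μ.toJordanDecomposition.negPart Set.univ).toReal := by
      have hae : (fun x => if x ∈ s then -(1/3 : ℝ) else 1/3)
          =ᵐ[μ.toJordanDecomposition.negPart] (fun _ => (-(1/3) : ℝ)) := by
        refine Filter.eventuallyEq_of_mem (?_ : s ∈ _) (fun x hx => by simp [hx])
        rw [mem_ae_iff]
        exact hN
      rw [integral_congr_ae hae, integral_const, smul_eq_mul, mul_comm]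
      rfl
    rw [pairing, hPint, hNint, tvNorm_eq]
    ring

lemma key_ineq (ν μ : SignedMeasure ℕ) :
    tvNorm ν ≤ 3 * blDualNorm (ν - μ) + tvNorm μ := by
  obtain ⟨f, hb, hl, hp⟩ := exists_norming ν
  have h23 : ((2/3 : NNReal) : ℝ) = 2/3 := by norm_num
  have hCK : (1/3 : ℝ) + ((2/3 : NNReal) : ℝ) ≤ 1 := by rw [h23]; norm_num
  have h1 : |pairing (ν - μ) f| ≤ blDualNorm (ν - μ) :=
    abs_pairing_le_blDualNorm _ hb hl hCK
  have h2 : |pairing μ f| ≤ (1/3) * tvNorm μ := abs_pairing_le μ hb (by norm_num)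
  have h3 : pairing ν f = pairing (ν - μ) f + pairing μ f := by
    have := pairing_add hb (ν - μ) μ
    rwa [sub_add_cancel] at this
  have h4 : pairing ν f ≤ |pairing (ν - μ) f| + |pairing μ f| := by
    rw [h3]; exact le_trans (le_abs_self _) (abs_add_le _ _)
  rw [hp] at h4
  linarith

/-- The measure `(δ_a - δ_b)/2` as a Jordan decomposition. -/
noncomputable def jab (a b : ℕ) (h : a ≠ b) : JordanDecomposition ℕ where
  posPart := (1/2 : NNReal) • Measure.dirac a
  negPart := (1/2 : NNReal) • Measure.dirac b
  posPart_finite := inferInstance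
  negPart_finite := inferInstance
  mutuallySingular := by
    refine ⟨{b}, measurableSet_singleton b, ?_, ?_⟩
    · rw [Measure.smul_apply, Measure.dirac_apply' a (measurableSet_singleton b)]
      simp [Set.indicator, h]
    · rw [Measure.smul_apply, Measure.dirac_apply' b (measurableSet_singleton b).compl]
      simp [Set.indicator]

lemma tvNorm_jab (a b : ℕ) (h : a ≠ b) : tvNorm (jab a b h).toSignedMeasure = 1 := by
  rw [tvNorm_eq, JordanDecomposition.toJordanDecomposition_toSignedMeasure]
  have hP : (jab a b h).posPart Set.univ = 1/2 := by
    rw [jab, Measure.smul_apply, Measure.dirac_apply_of_mem (Set.mem_univ a)]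
    simp [ENNReal.smul_def]
  have hN : (jab a b h).negPart Set.univ = 1/2 := by
    rw [jab, Measure.smul_apply, Measure.dirac_apply_of_mem (Set.mem_univ b)]
    simp [ENNReal.smul_def]
  rw [hP, hN]
  norm_num

lemma pairing_jab (a b : ℕ) (h : a ≠ b) (f : ℕ → ℝ) :
    pairing (jab a b h).toSignedMeasure f = (f a - f b) / 2 := by
  rw [pairing, JordanDecomposition.toJordanDecomposition_toSignedMeasure]
  show (∫ x, f x ∂((1/2 : NNReal) • Measure.dirac a))
      - (∫ x, f x ∂((1/2 : NNReal) • Measure.dirac b)) = _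
  rw [integral_smul_nnreal_measure, integral_smul_nnreal_measure, integral_dirac, integral_dirac]
  simp [NNReal.smul_def]
  ring

lemma abs_sub_lt_one_of_floor_eq' {x y : ℝ} (h : ⌊x⌋ = ⌊y⌋) : |x - y| < 1 := by
  rw [abs_sub_lt_iff]
  constructor
  · have h1 : x < ⌊x⌋ + 1 := Int.lt_floor_add_one x
    have h2 : (⌊y⌋:ℝ) ≤ y := Int.floor_le y
    rw [h] at h1
    linarith
  · have h1 : y < ⌊y⌋ + 1 := Int.lt_floor_add_one y
    have h2 : (⌊x⌋:ℝ) ≤ x := Int.floor_le x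
    rw [h] at h2
    linarith


/-- The `σ(M(S), BL(S))`-weak topology on `M(S)`: the coarsest topology making
`μ ↦ ⟨μ, f⟩` continuous for every bounded Lipschitz `f`. -/
noncomputable def weakTop (S : Type*) [PseudoMetricSpace S] [MeasurableSpace S] :
    TopologicalSpace (SignedMeasure S) :=
  ⨅ f : {g : S → ℝ // IsBL g},
    TopologicalSpace.induced (fun μ : SignedMeasure S => pairing μ f.1) inferInstance

/-- The topology on `M(S)` induced by the norm `‖·‖*_BL`, generated by the open balls. -/
noncomputable def normTop (S : Type*) [PseudoMetricSpace S] [MeasurableSpace S] :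
    TopologicalSpace (SignedMeasure S) :=
  TopologicalSpace.generateFrom
    {B | ∃ (μ : SignedMeasure S) (ε : ℝ), 0 < ε ∧ B = {ν | blDualNorm (ν - μ) < ε}}


/-- **Counterexample on `ℕ`** (with the metric inherited from the Euclidean metric of `ℝ`):
on the closed total variation unit ball `M = {μ : ‖μ‖_TV ≤ 1}` of `M(ℕ)`, the relative
`σ(M(ℕ), BL(ℕ))`-weak topology does not coincide with the relative `‖·‖*_BL`-norm topology;
in particular the unit sphere `{μ : ‖μ‖_TV = 1}` is `‖·‖*_BL`-closed in `M` but not closed in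
the relative weak topology on `M`. -/
theorem weak_and_norm_topologies_differ_on_tv_ball :
    (TopologicalSpace.induced
        ((↑) : {μ : SignedMeasure ℕ // tvNorm μ ≤ 1} → SignedMeasure ℕ) (weakTop ℕ) ≠
      TopologicalSpace.induced
        ((↑) : {μ : SignedMeasure ℕ // tvNorm μ ≤ 1} → SignedMeasure ℕ) (normTop ℕ)) ∧
    @IsClosed {μ : SignedMeasure ℕ // tvNorm μ ≤ 1}
      (TopologicalSpace.induced
        ((↑) : {μ : SignedMeasure ℕ // tvNorm μ ≤ 1} → SignedMeasure ℕ) (normTop ℕ))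
      {μ : {μ : SignedMeasure ℕ // tvNorm μ ≤ 1} | tvNorm (μ : SignedMeasure ℕ) = 1} ∧
    ¬ @IsClosed {μ : SignedMeasure ℕ // tvNorm μ ≤ 1}
      (TopologicalSpace.induced
        ((↑) : {μ : SignedMeasure ℕ // tvNorm μ ≤ 1} → SignedMeasure ℕ) (weakTop ℕ))
      {μ : {μ : SignedMeasure ℕ // tvNorm μ ≤ 1} | tvNorm (μ : SignedMeasure ℕ) = 1} := by
  have h2 : @IsClosed {μ : SignedMeasure ℕ // tvNorm μ ≤ 1}
      (TopologicalSpace.induced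
        ((↑) : {μ : SignedMeasure ℕ // tvNorm μ ≤ 1} → SignedMeasure ℕ) (normTop ℕ))
      {μ : {μ : SignedMeasure ℕ // tvNorm μ ≤ 1} | tvNorm (μ : SignedMeasure ℕ) = 1} := by
    rw [@isClosed_induced_iff _ _ (normTop ℕ) _ _]
    refine ⟨(⋃ (p : {μ : SignedMeasure ℕ // tvNorm μ < 1}),
      {ν | blDualNorm (ν - p.1) < (1 - tvNorm p.1)/3})ᶜ, ?_, ?_⟩
    · letI : TopologicalSpace (SignedMeasure ℕ) := normTop ℕ
      rw [isClosed_compl_iff]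
      refine isOpen_iUnion (fun p => ?_)
      exact TopologicalSpace.isOpen_generateFrom_of_mem
        ⟨p.1, (1 - tvNorm p.1)/3, by have := p.2; linarith, rfl⟩
    · ext ⟨ν, hν⟩
      simp only [Set.mem_preimage, Set.mem_compl_iff, Set.mem_iUnion, Set.mem_setOf_eq]
      constructor
      · intro hno
        by_contra h1
        have hlt : tvNorm ν < 1 := lt_of_le_of_ne hν h1
        refine hno ⟨⟨ν, hlt⟩, ?_⟩
        have hzz : ν - ν = 0 := sub_self ν
        show blDualNorm (ν - ν) < _
        rw [hzz]
        have hb0 : blDualNorm (0 : SignedMeasure ℕ) ≤ 0 := by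
          have := blDualNorm_le_tvNorm (0 : SignedMeasure ℕ)
          rwa [tvNorm_zero] at this
        linarith
      · intro h1
        rintro ⟨p, hp⟩
        have hk := key_ineq ν p.1
        have hp2 := p.2
        rw [h1] at hk
        linarith
  have hh3 : ¬ @IsClosed {μ : SignedMeasure ℕ // tvNorm μ ≤ 1}
      (TopologicalSpace.induced
        ((↑) : {μ : SignedMeasure ℕ // tvNorm μ ≤ 1} → SignedMeasure ℕ) (weakTop ℕ))
      {μ : {μ : SignedMeasure ℕ // tvNorm μ ≤ 1} | tvNorm (μ : SignedMeasure ℕ) = 1} := by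
    intro hcl
    have hz1 : tvNorm (0 : SignedMeasure ℕ) ≤ 1 := by rw [tvNorm_zero]; norm_num
    set z : {μ : SignedMeasure ℕ // tvNorm μ ≤ 1} := ⟨0, hz1⟩ with hzdef
    have hz0 : (z : SignedMeasure ℕ) = 0 := rfl
    have hzmem : z ∈ {μ : {μ : SignedMeasure ℕ // tvNorm μ ≤ 1} |
        tvNorm (μ : SignedMeasure ℕ) = 1}ᶜ := by
      simp only [Set.mem_compl_iff, Set.mem_setOf_eq, hz0, tvNorm_zero]
      norm_num
    have hopen := hcl.isOpen_compl
    rw [@isOpen_induced_iff _ _ (weakTop ℕ) _ _] at hopen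
    obtain ⟨U, hUopen, hUpre⟩ := hopen
    have h0U : (0 : SignedMeasure ℕ) ∈ U := by
      have hzu : z ∈ ((↑) : {μ : SignedMeasure ℕ // tvNorm μ ≤ 1} → SignedMeasure ℕ) ⁻¹' U := by
        rw [hUpre]; exact hzmem
      simpa [hz0] using hzu
    have hw : @nhds _ (weakTop ℕ) (0 : SignedMeasure ℕ)
        = ⨅ f : {g : ℕ → ℝ // IsBL g},
            Filter.comap (fun μ : SignedMeasure ℕ => pairing μ f.1) (nhds 0) := by
      rw [weakTop, _root_.nhds_iInf]
      exact iInf_congr (fun f => by rw [nhds_induced, pairing_zero])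
    have hUnb : U ∈ @nhds _ (weakTop ℕ) (0 : SignedMeasure ℕ) := by
      letI : TopologicalSpace (SignedMeasure ℕ) := weakTop ℕ
      exact hUopen.mem_nhds h0U
    rw [hw, Filter.mem_iInf] at hUnb
    obtain ⟨I, hIfin, V, hV, hUeq⟩ := hUnb
    haveI : Finite I := hIfin.to_subtype
    have hVe : ∀ i : I, ∃ ε > 0, ∀ μ : SignedMeasure ℕ,
        |pairing μ (i : {g : ℕ → ℝ // IsBL g}).1| < ε → μ ∈ V i := by
      intro i
      have hVi := hV i
      rw [Filter.mem_comap] at hVi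
      obtain ⟨W, hW, hWs⟩ := hVi
      rw [Metric.mem_nhds_iff] at hW
      obtain ⟨ε, hε, hball⟩ := hW
      exact ⟨ε, hε, fun μ hμ => hWs (hball (by
        simpa [Metric.mem_ball, Real.dist_eq] using hμ))⟩
    choose ε hε hball using hVe
    have hCex : ∀ i : I, ∃ C : ℝ, ∀ x, |(i : {g : ℕ → ℝ // IsBL g}).1 x| ≤ C :=
      fun i => (i : {g : ℕ → ℝ // IsBL g}).2.1
    choose C hC using hCex
    have hmaps : Set.MapsTo (fun n (i : I) => ⌊(i : {g : ℕ → ℝ // IsBL g}).1 n / ε i⌋)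
        Set.univ (Set.pi Set.univ fun i : I => Set.Icc ⌊-C i / ε i⌋ ⌊C i / ε i⌋) := by
      intro n _ i _
      have h1 := (abs_le.1 (hC i n)).1
      have h2 := (abs_le.1 (hC i n)).2
      have hεi := hε i
      constructor
      · exact Int.floor_mono (by gcongr)
      · exact Int.floor_mono (by gcongr)
    have hfin : (Set.pi Set.univ fun i : I => Set.Icc ⌊-C i / ε i⌋ ⌊C i / ε i⌋).Finite :=
      Set.Finite.pi (fun i => Set.finite_Icc _ _)
    obtain ⟨a, -, b, -, hab, hfab⟩ := Set.infinite_univ.exists_ne_map_eq_of_mapsTo hmaps hfin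
    have hsmall : ∀ i : I, |(i : {g : ℕ → ℝ // IsBL g}).1 a
        - (i : {g : ℕ → ℝ // IsBL g}).1 b| < ε i := by
      intro i
      have hfl := congrFun hfab i
      have h1 : |(i : {g : ℕ → ℝ // IsBL g}).1 a / ε i
          - (i : {g : ℕ → ℝ // IsBL g}).1 b / ε i| < 1 := abs_sub_lt_one_of_floor_eq' hfl
      rw [div_sub_div_same, abs_div, abs_of_pos (hε i), div_lt_one (hε i)] at h1
      exact h1
    set μab := (jab a b hab).toSignedMeasure with hμab
    have htv : tvNorm μab = 1 := tvNorm_jab a b hab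
    have hmemU : μab ∈ U := by
      rw [hUeq]
      refine Set.mem_iInter.2 fun i => hball i μab ?_
      rw [hμab, pairing_jab a b hab]
      have hi := hsmall i
      have hεi := hε i
      rw [abs_div, abs_of_pos (by norm_num : (0:ℝ) < 2)]
      linarith [abs_nonneg ((i : {g : ℕ → ℝ // IsBL g}).1 a
        - (i : {g : ℕ → ℝ // IsBL g}).1 b)]
    have hin : (⟨μab, htv.le⟩ : {μ : SignedMeasure ℕ // tvNorm μ ≤ 1}) ∈
        ((↑) : {μ : SignedMeasure ℕ // tvNorm μ ≤ 1} → SignedMeasure ℕ) ⁻¹' U := hmemU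
    rw [hUpre] at hin
    exact hin htv
  exact ⟨fun heq => hh3 (by rw [heq]; exact h2), h2, hh3⟩
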